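/- Let K be a Lie algebra that is also a module over a commutative unital ring N, with N-bilinear bracket, and suppose K = [K, K]. Then every maximal finite-codimensional Lie ideal K₀ of K is an N-submodule: N·K₀ = K₀. -/
import Mathlib


/-- Let `K` be a Lie algebra over `ℝ` that is also a module over a commutative unital
`ℝ`-algebra `N`, with `N`-bilinear Lie bracket, and suppose `K` is perfect, `K = [K,K]`.
Then every maximal finite-codimensional Lie ideal `K₀` of `K` is an `N`-submodule:
`N • K₀ = K₀`. -/
theorem stmt9 {N K : Type*} [CommRing N] [Algebra ℝ N]
    [LieRing K] [LieAlgebra ℝ K] [Module N K]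
    (hbil : ∀ (f : N) (k k' : K), ⁅f • k, k'⁆ = f • ⁅k, k'⁆)
    (hperf : LieAlgebra.derivedSeries ℝ K 1 = ⊤)
    (K₀ : LieIdeal ℝ K) (hK₀ : K₀ ≠ ⊤)
    [FiniteDimensional ℝ (K ⧸ K₀.toSubmodule)]
    (hmax : ∀ J : LieIdeal ℝ K, K₀ ≤ J → J ≠ ⊤ →
      FiniteDimensional ℝ (K ⧸ J.toSubmodule) → J = K₀) :
    ∀ (f : N) (k : K), k ∈ K₀ → f • k ∈ K₀ := by
  -- The "normalizer into K₀" ideal: Z = {x | ∀ y, ⁅x, y⁆ ∈ K₀}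
  set Z : LieIdeal ℝ K :=
    { carrier := {x : K | ∀ y : K, ⁅x, y⁆ ∈ K₀}
      add_mem' := by
        intro a b ha hb y
        rw [add_lie]
        exact K₀.add_mem' (ha y) (hb y)
      zero_mem' := by
        intro y
        rw [zero_lie]
        exact K₀.zero_mem'
      smul_mem' := by
        intro c a ha y
        rw [smul_lie]
        exact K₀.smul_mem' c (ha y)
      lie_mem := by
        intro a x hx y
        have h : ⁅⁅a, x⁆, y⁆ = ⁅a, ⁅x, y⁆⁆ - ⁅x, ⁅a, y⁆⁆ := by
          rw [lie_lie]
        rw [h]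
        exact K₀.toSubmodule.sub_mem (K₀.lie_mem (hx y)) (hx ⁅a, y⁆) } with hZdef
  have hK₀Z : K₀ ≤ Z := by
    intro x hx y
    have : ⁅x, y⁆ = -⁅y, x⁆ := by rw [lie_skew]
    rw [this]
    exact K₀.toSubmodule.neg_mem (K₀.lie_mem hx)
  -- finite codimension of Z
  have hfin : FiniteDimensional ℝ (K ⧸ Z.toSubmodule) := by
    have hsub : K₀.toSubmodule ≤ Z.toSubmodule := hK₀Z
    have hsurj : Function.Surjective
        (Submodule.mapQ K₀.toSubmodule Z.toSubmodule LinearMap.id hsub) := by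
      intro z
      obtain ⟨x, rfl⟩ := Submodule.Quotient.mk_surjective Z.toSubmodule z
      exact ⟨Submodule.Quotient.mk x, rfl⟩
    exact Module.Finite.of_surjective _ hsurj
  -- Z ≠ ⊤, since otherwise [K,K] ≤ K₀ contradicting perfectness
  have hZne : Z ≠ ⊤ := by
    intro htop
    apply hK₀
    rw [eq_top_iff, ← hperf]
    rw [LieAlgebra.derivedSeries_def, LieAlgebra.derivedSeriesOfIdeal_succ,
      LieAlgebra.derivedSeriesOfIdeal_zero]
    rw [LieSubmodule.lie_le_iff]
    intro x _ m _
    have hxZ : x ∈ Z := by rw [htop]; trivial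
    exact hxZ m
  have hZ : Z = K₀ := hmax Z hK₀Z hZne hfin
  intro f k hk
  have hfk : f • k ∈ Z := by
    intro y
    have h1 : ⁅f • k, y⁆ = ⁅k, f • y⁆ := by
      rw [hbil]
      have : ⁅k, f • y⁆ = -⁅f • y, k⁆ := by rw [lie_skew]
      rw [this, hbil, ← smul_neg]
      congr 1
      rw [lie_skew]
    rw [h1]
    have : ⁅k, f • y⁆ = -⁅f • y, k⁆ := by rw [lie_skew]
    rw [this]
    exact K₀.toSubmodule.neg_mem (K₀.lie_mem hk)
  rwa [hZ] at hfk
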